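/- Let R, V, s be real numbers with R > 0, V > 0, s > 0, and set D(γ) = (γ+2)²R² − 4(γ+1)(1+s)(R²+sV). Then the function γ ↦ (γ+2)R − √(D(γ)) tends to 2(1+s)(R²+sV)/R as γ → ∞. Consequently X(γ) = ((γ+2)R − √(D(γ)))/(2(1+s)) tends to (R²+sV)/R as γ → ∞. -/

import Mathlib

open Filter

/-- For `R > 0`, `V > 0`, `s > 0` and
`D(γ) = (γ+2)²R² − 4(γ+1)(1+s)(R²+sV)`, the function `γ ↦ (γ+2)R − √(D(γ))`
tends to `2(1+s)(R²+sV)/R` as `γ → ∞`; consequently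
`X(γ) = ((γ+2)R − √(D(γ)))/(2(1+s))` tends to `(R²+sV)/R`. -/
theorem power_utility_mean_limit (R V s : ℝ) (hR : 0 < R) (hV : 0 < V) (hs : 0 < s)
    (D : ℝ → ℝ)
    (hD : ∀ γ, D γ = (γ + 2) ^ 2 * R ^ 2 - 4 * (γ + 1) * (1 + s) * (R ^ 2 + s * V)) :
    Tendsto (fun γ => (γ + 2) * R - Real.sqrt (D γ)) atTop
        (nhds (2 * (1 + s) * (R ^ 2 + s * V) / R)) ∧
      Tendsto (fun γ => ((γ + 2) * R - Real.sqrt (D γ)) / (2 * (1 + s))) atTop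
        (nhds ((R ^ 2 + s * V) / R)) := by
  set K := (1 + s) * (R ^ 2 + s * V) with hK
  have hKpos : 0 < K := by positivity
  have hu : Tendsto (fun γ : ℝ => γ⁻¹) atTop (nhds (0 : ℝ)) := tendsto_inv_atTop_zero
  -- limit of D γ / γ^2
  have h1 : Tendsto (fun γ => D γ / γ ^ 2) atTop (nhds (R ^ 2)) := by
    have hc : Continuous (fun u : ℝ => (1 + 2 * u) ^ 2 * R ^ 2 - 4 * K * (u + u ^ 2)) := by
      continuity
    have hcont := (hc.tendsto 0)
    have hcont' : Tendsto (fun u : ℝ => (1 + 2 * u) ^ 2 * R ^ 2 - 4 * K * (u + u ^ 2))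
        (nhds 0) (nhds (R ^ 2)) := by simpa using hcont
    refine (hcont'.comp hu).congr' ?_
    filter_upwards [eventually_gt_atTop (0 : ℝ)] with γ hγ
    have hγ0 : γ ≠ 0 := ne_of_gt hγ
    simp only [Function.comp]
    rw [hD, hK]
    field_simp
  have hDpos : ∀ᶠ γ in atTop, 0 < D γ := by
    have hev : ∀ᶠ γ in atTop, 0 < D γ / γ ^ 2 :=
      h1.eventually (eventually_gt_nhds (by positivity))
    filter_upwards [hev, eventually_gt_atTop (0 : ℝ)] with γ h1' hγ
    have := mul_pos h1' (pow_pos hγ 2)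
    rwa [div_mul_cancel₀ _ (by positivity : (γ:ℝ) ^ 2 ≠ 0)] at this
  have h2 : Tendsto (fun γ => Real.sqrt (D γ) / γ) atTop (nhds R) := by
    have h2' : Tendsto (fun γ => Real.sqrt (D γ / γ ^ 2)) atTop (nhds R) := by
      have := (Real.continuous_sqrt.tendsto (R ^ 2)).comp h1
      simpa [Function.comp_def, Real.sqrt_sq hR.le] using this
    refine h2'.congr' ?_
    filter_upwards [hDpos, eventually_gt_atTop (0 : ℝ)] with γ hDγ hγ
    rw [Real.sqrt_div hDγ.le, Real.sqrt_sq hγ.le]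
  -- limits of numerator and denominator
  have hnum : Tendsto (fun γ => 4 * K * (γ + 1) / γ) atTop (nhds (4 * K)) := by
    have hc : Continuous (fun u : ℝ => 4 * K * (1 + u)) := by continuity
    have hcont := (hc.tendsto 0)
    have hcont' : Tendsto (fun u : ℝ => 4 * K * (1 + u)) (nhds 0) (nhds (4 * K)) := by
      simpa using hcont
    refine (hcont'.comp hu).congr' ?_
    filter_upwards [eventually_gt_atTop (0 : ℝ)] with γ hγ
    have hγ0 : γ ≠ 0 := ne_of_gt hγ
    simp only [Function.comp]
    field_simp
  have hden : Tendsto (fun γ => (γ + 2) * R / γ + Real.sqrt (D γ) / γ) atTop (nhds (R + R)) := by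
    have ha : Tendsto (fun γ : ℝ => (γ + 2) * R / γ) atTop (nhds R) := by
      have hc : Continuous (fun u : ℝ => (1 + 2 * u) * R) := by continuity
      have hcont := (hc.tendsto 0)
      have hcont' : Tendsto (fun u : ℝ => (1 + 2 * u) * R) (nhds 0) (nhds R) := by
        simpa using hcont
      refine (hcont'.comp hu).congr' ?_
      filter_upwards [eventually_gt_atTop (0 : ℝ)] with γ hγ
      have hγ0 : γ ≠ 0 := ne_of_gt hγ
      simp only [Function.comp]
      field_simp
    exact ha.add h2
  have hRR : R + R ≠ 0 := by positivity
  have hg : Tendsto (fun γ => (4 * K * (γ + 1) / γ) / ((γ + 2) * R / γ + Real.sqrt (D γ) / γ))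
      atTop (nhds (4 * K / (R + R))) := hnum.div hden hRR
  have hmain : Tendsto (fun γ => (γ + 2) * R - Real.sqrt (D γ)) atTop
      (nhds (2 * (1 + s) * (R ^ 2 + s * V) / R)) := by
    have hval : 4 * K / (R + R) = 2 * (1 + s) * (R ^ 2 + s * V) / R := by
      rw [hK]; field_simp; ring
    rw [← hval]
    refine hg.congr' ?_
    filter_upwards [hDpos, eventually_gt_atTop (0 : ℝ)] with γ hDγ hγ
    have hγ0 : γ ≠ 0 := ne_of_gt hγ
    have hsq : Real.sqrt (D γ) ^ 2 = D γ := Real.sq_sqrt hDγ.le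
    have hsqnn : 0 ≤ Real.sqrt (D γ) := Real.sqrt_nonneg _
    have hdpos : 0 < (γ + 2) * R + Real.sqrt (D γ) := by positivity
    have hdne : (γ + 2) * R / γ + Real.sqrt (D γ) / γ ≠ 0 := by
      rw [← add_div, ne_eq, div_eq_zero_iff]
      push_neg
      exact ⟨ne_of_gt hdpos, hγ0⟩
    rw [← add_div]
    have hred : 4 * K * (γ + 1) / γ / (((γ + 2) * R + Real.sqrt (D γ)) / γ)
        = 4 * K * (γ + 1) / ((γ + 2) * R + Real.sqrt (D γ)) := by
      field_simp
    rw [hred, div_eq_iff (ne_of_gt hdpos)]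
    have hDval := hD γ
    nlinarith [hsq]
  refine ⟨hmain, ?_⟩
  have h2s : (2 * (1 + s)) ≠ 0 := by positivity
  have := hmain.div_const (2 * (1 + s))
  have hval2 : 2 * (1 + s) * (R ^ 2 + s * V) / R / (2 * (1 + s)) = (R ^ 2 + s * V) / R := by
    rw [mul_div_assoc, mul_div_cancel_left₀ _ h2s]
  rwa [hval2] at this
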